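/- Let σ₀, σ₁ ∈ S_{n+1} with inv(σ₁) = inv(σ₀) + 1 and σ₁ = σ₀·(j₀ j₁) = (i₀ i₁)·σ₀ where i₀ < i₁, j₀ < j₁, σ₀(i₀) = j₀ and σ₀(i₁) = j₁ (a covering relation in the strong Bruhat order). Then for every k ∈ {1,…,n}, mult_k(σ₁) = mult_k(σ₀) + (j₁ − j₀) if i₀ ≤ k < i₁, and mult_k(σ₁) = mult_k(σ₀) otherwise. -/
import Mathlib


/-- The set of inversions of a permutation. -/
def invSet {n : ℕ} (σ : Equiv.Perm (Fin n)) : Finset (Fin n × Fin n) :=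
  Finset.univ.filter fun p => p.1 < p.2 ∧ σ p.2 < σ p.1

/-- The number of inversions of a permutation. -/
def invCount {n : ℕ} (σ : Equiv.Perm (Fin n)) : ℕ := (invSet σ).card

/-- `mult_k(σ) = Σ_{j=1}^{k} (σ(j) - j)` (0-indexed: sum over positions `j < k`). -/
def multk {n : ℕ} (σ : Equiv.Perm (Fin n)) (k : ℕ) : ℤ :=
  ∑ j ∈ Finset.univ.filter (fun j : Fin n => (j : ℕ) < k), ((σ j : ℤ) - (j : ℕ))

/-- If `σ₁ = σ₀·(j₀ j₁) = (i₀ i₁)·σ₀` is a Bruhat covering (right-action convention: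
`σ₀·(j₀ j₁)` applies `σ₀` first, then swaps the values `j₀, j₁`), with
`i₀ < i₁`, `j₀ < j₁`, `σ₀(i₀) = j₀`, `σ₀(i₁) = j₁` and `inv(σ₁) = inv(σ₀) + 1`, then
`mult_k(σ₁) = mult_k(σ₀) + (j₁ - j₀)·[i₀ ≤ k < i₁]` for `k ∈ {1,…,n}`
(the paper's 1-indexed condition `i₀ ≤ k < i₁` reads `i₀ < k ≤ i₁` in 0-indexing). -/
theorem multk_of_bruhat_cover (n : ℕ) (σ₀ σ₁ : Equiv.Perm (Fin (n + 1)))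
    (i₀ i₁ j₀ j₁ : Fin (n + 1)) (hi : i₀ < i₁) (hj : j₀ < j₁)
    (h0 : σ₀ i₀ = j₀) (h1 : σ₀ i₁ = j₁)
    (hR : σ₁ = Equiv.swap j₀ j₁ * σ₀) (hL : σ₁ = σ₀ * Equiv.swap i₀ i₁)
    (hinv : invCount σ₁ = invCount σ₀ + 1)
    (k : ℕ) (hk1 : 1 ≤ k) (hkn : k ≤ n) :
    multk σ₁ k =
      multk σ₀ k + (if (i₀ : ℕ) < k ∧ k ≤ (i₁ : ℕ) then (j₁ : ℤ) - (j₀ : ℤ) else 0) := by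

  have hne : i₀ ≠ i₁ := ne_of_lt hi
  have key : ∀ j : Fin (n+1), (σ₁ j : ℤ) - (j : ℕ) =
      ((σ₀ j : ℤ) - (j : ℕ)) +
      ((if j = i₀ then (j₁ : ℤ) - (j₀ : ℤ) else 0) +
       (if j = i₁ then (j₀ : ℤ) - (j₁ : ℤ) else 0)) := by
    intro j
    rw [hL]
    by_cases hj0 : j = i₀
    · subst hj0
      simp [Equiv.Perm.mul_apply, Equiv.swap_apply_left, h0, h1, hne]
    · by_cases hj1 : j = i₁
      · subst hj1
        simp [Equiv.Perm.mul_apply, Equiv.swap_apply_right, h0, h1, hne.symm, hj0]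
      · simp [Equiv.Perm.mul_apply, Equiv.swap_apply_of_ne_of_ne hj0 hj1, hj0, hj1]
  unfold multk
  rw [Finset.sum_congr rfl (fun j _ => key j), Finset.sum_add_distrib,
    Finset.sum_add_distrib, Finset.sum_ite_eq' , Finset.sum_ite_eq']
  have hi' : (i₀ : ℕ) < (i₁ : ℕ) := hi
  simp only [Finset.mem_filter, Finset.mem_univ, true_and]
  by_cases hA : (i₀ : ℕ) < k <;> by_cases hB : (i₁ : ℕ) < k <;>
    simp [hA, hB] <;> omega
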